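/- arXiv:1804.05264 — 2 statements merged into one kernel-verified Lean document; each statement's English description precedes it below -/
import Mathlib

section
/- Let V be a realization of M, let W be a normal matrix for V, and let S = Vᵀ * W be the corresponding slack matrix. Then the rows of S form a realization of M: for every set I ⊆ Fin n, I is independent in M if and only if the rows of S indexed by I form a linearly independent family over k. -/
open Classical Matrix MvPolynomial

/-- `V` is a realization of the matroid `M`: a set `I` is independent in `M` iff the
columns of `V` indexed by `I` are linearly independent over `k`. -/
def IsRealization {k : Type*} [Field k] {n d : ℕ} (M : Matroid (Fin n))
    (V : Matrix (Fin (d + 1)) (Fin n) k) : Prop :=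
  ∀ I : Set (Fin n), M.Indep I ↔ LinearIndependent k (fun i : I => Vᵀ (i : Fin n))

/-- `F` is a hyperplane of `M`: a flat of `M` of rank `d`. -/
def IsHyperplane {n : ℕ} (M : Matroid (Fin n)) (d : ℕ) (F : Set (Fin n)) : Prop :=
  M.IsFlat F ∧ ∃ I, M.IsBasis I F ∧ I.ncard = d

/-- `H` is a bijection onto the set of hyperplanes of `M`. -/
def HypEnum {n h : ℕ} (M : Matroid (Fin n)) (d : ℕ) (H : Fin h → Set (Fin n)) : Prop :=
  Function.Injective H ∧ ∀ F : Set (Fin n), (∃ j, H j = F) ↔ IsHyperplane M d F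

/-- `M` has rank `r` : some base of `M` has cardinality `r`. -/
def HasRank {n : ℕ} (M : Matroid (Fin n)) (r : ℕ) : Prop :=
  ∃ B, M.IsBase B ∧ B.ncard = r

/-- `W` is a normal matrix for the realization `V`: the dot product of column `j` of `W`
with column `i` of `V` is zero iff `i ∈ H j`. -/
def IsNormalMatrix {k : Type*} [Field k] {n d h : ℕ} (H : Fin h → Set (Fin n))
    (V : Matrix (Fin (d + 1)) (Fin n) k) (W : Matrix (Fin (d + 1)) (Fin h) k) : Prop :=
  ∀ i j, (∑ r : Fin (d + 1), W r j * V r i) = 0 ↔ i ∈ H j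

/-- Projective equivalence of realizations. -/
def ProjEquiv {k : Type*} [Field k] {n d : ℕ}
    (V V' : Matrix (Fin (d + 1)) (Fin n) k) : Prop :=
  ∃ (A : Matrix (Fin (d + 1)) (Fin (d + 1)) k) (b : Fin n → kˣ),
    IsUnit A ∧ V' = A * V * Matrix.diagonal (fun i => (b i : k))

/-- The index type of slack variables: pairs `(i, j)` with `i ∉ H j`. -/
abbrev SlackVar {n h : ℕ} (H : Fin h → Set (Fin n)) : Type :=
  {p : Fin n × Fin h // p.1 ∉ H p.2}

/-- The symbolic slack matrix of `M`. -/
noncomputable def symbSlack {n h : ℕ} (H : Fin h → Set (Fin n)) (k : Type*) [Field k] :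
    Matrix (Fin n) (Fin h) (MvPolynomial (SlackVar H) k) :=
  fun i j => if hij : i ∈ H j then 0 else X ⟨(i, j), hij⟩

/-- The ideal `J` generated by the `(d+2)`-minors of the symbolic slack matrix. -/
noncomputable def minorIdeal {n h : ℕ} (d : ℕ) (H : Fin h → Set (Fin n)) (k : Type*)
    [Field k] : Ideal (MvPolynomial (SlackVar H) k) :=
  Ideal.span { f | ∃ (r : Fin (d + 2) → Fin n) (c : Fin (d + 2) → Fin h),
    Function.Injective r ∧ Function.Injective c ∧
      f = ((symbSlack H k).submatrix r c).det }

/-- The product `P` of all slack variables. -/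
noncomputable def allVarsProd {n h : ℕ} (H : Fin h → Set (Fin n)) (k : Type*) [Field k] :
    MvPolynomial (SlackVar H) k :=
  ∏ e : SlackVar H, X e

/-- The slack ideal `I_M` : the saturation of `J` at `P`, as a set. -/
noncomputable def slackSet {n h : ℕ} (d : ℕ) (H : Fin h → Set (Fin n)) (k : Type*) [Field k] :
    Set (MvPolynomial (SlackVar H) k) :=
  {f | ∃ N : ℕ, allVarsProd H k ^ N * f ∈ minorIdeal d H k}

/-- The matrix `S(s)` obtained by evaluating the symbolic slack matrix at `s`. -/
noncomputable def slackEval {k : Type*} [Field k] {n h : ℕ} (H : Fin h → Set (Fin n))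
    (s : SlackVar H → k) : Matrix (Fin n) (Fin h) k :=
  fun i j => if hij : i ∈ H j then 0 else s ⟨(i, j), hij⟩

/-- Cyclic successor in `Fin m`. -/
def cycSucc {m : ℕ} (i : Fin m) : Fin m := ⟨(i.val + 1) % m, Nat.mod_lt _ i.pos⟩

/-- The cycle ideal `C_S` of a slack matrix `S`. -/
noncomputable def cycleIdeal {k : Type*} [Field k] {n h : ℕ} (H : Fin h → Set (Fin n))
    (S : Matrix (Fin n) (Fin h) k) : Ideal (MvPolynomial (SlackVar H) k) :=
  Ideal.span { f | ∃ (m : ℕ) (_ : 2 ≤ m) (a : Fin m → Fin n) (b : Fin m → Fin h)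
    (_ : Function.Injective a) (_ : Function.Injective b)
    (h1 : ∀ i, a i ∉ H (b i)) (h2 : ∀ i, a (cycSucc i) ∉ H (b i)),
    f = C (∏ i, S (a (cycSucc i)) (b i)) * ∏ i, X ⟨(a i, b i), h1 i⟩
      - C (∏ i, S (a i) (b i)) * ∏ i, X ⟨(a (cycSucc i), b i), h2 i⟩ }

lemma my_flat_closure {α : Type*} (M : Matroid α) (X : Set α) : M.IsFlat (M.closure X) := by
  rw [Matroid.closure_eq_subtypeClosure]
  exact Matroid.isClosed_iff_isFlat.mp (M.subtypeClosure.isClosed_closure _)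

/-- the rows of a slack matrix of `M` form a realization of `M`. -/
theorem stmt2 {k : Type*} [Field k] {n d h : ℕ} (M : Matroid (Fin n))
    (hE : M.E = Set.univ) (hrk : HasRank M (d + 1))
    (H : Fin h → Set (Fin n)) (hH : HypEnum M d H)
    (V : Matrix (Fin (d + 1)) (Fin n) k) (hV : IsRealization M V)
    (W : Matrix (Fin (d + 1)) (Fin h) k) (hW : IsNormalMatrix H V W) :
    ∀ I : Set (Fin n),
      M.Indep I ↔ LinearIndependent k (fun i : I => (Vᵀ * W) (i : Fin n)) := by
  -- The linear map `v ↦ v ᵥ* W`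
  set L : (Fin (d + 1) → k) →ₗ[k] (Fin h → k) := W.vecMulLinear with hL
  have hrow : ∀ i : Fin n, (Vᵀ * W) i = L (Vᵀ i) := by
    intro i
    funext j
    simp [hL, Matrix.mul_apply, Matrix.vecMulLinear_apply, Matrix.vecMul, dotProduct]
  have hLval : ∀ (i : Fin n) (j : Fin h), L (Vᵀ i) j = ∑ r : Fin (d + 1), W r j * V r i := by
    intro i j
    simp only [hL, Matrix.vecMulLinear_apply, Matrix.vecMul, dotProduct]
    exact Finset.sum_congr rfl fun r _ => by rw [Matrix.transpose_apply, mul_comm]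
  -- a base of M
  obtain ⟨B, hB, hBcard⟩ := hrk
  have hBfin : B.Finite := B.toFinite
  have hBindep : M.Indep B := hB.indep
  have hli : LinearIndependent k (fun b : B => Vᵀ (b : Fin n)) := (hV B).mp hBindep
  have hBne : B.Nonempty := by
    rw [← Set.ncard_pos hBfin, hBcard]; omega
  have : Nonempty B := hBne.to_subtype
  have hcard : Fintype.card B = Module.finrank k (Fin (d + 1) → k) := by
    rw [Module.finrank_fintype_fun_eq_card, Fintype.card_fin, ← Nat.card_coe_set_eq,
      Nat.card_eq_fintype_card] at *
    rw [hBcard]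
  set bas := basisOfLinearIndependentOfCardEqFinrank hli hcard with hbas
  have hbas_eq : ∀ b : B, bas b = Vᵀ (b : Fin n) := fun b => by
    rw [hbas, coe_basisOfLinearIndependentOfCardEqFinrank]
  -- for each b ∈ B there is a hyperplane through B \ {b}
  have hyp : ∀ b ∈ B, ∃ j : Fin h, H j = M.closure (B \ {b}) := by
    intro b hb
    apply (hH.2 _).mpr
    refine ⟨my_flat_closure M _, B \ {b}, ?_, ?_⟩
    · exact (hBindep.subset Set.diff_subset).isBasis_closure
    · rw [Set.ncard_diff_singleton_of_mem hb, hBcard]; omega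
  -- L is injective
  have hker : ∀ v, L v = 0 → v = 0 := by
    intro v hv
    have hrepr : ∀ b : B, bas.repr v b = 0 := by
      intro b
      obtain ⟨j, hj⟩ := hyp b b.2
      have hb_not : (b : Fin n) ∉ H j := by
        rw [hj]; exact hBindep.notMem_closure_diff_of_mem b.2
      have hS : ∀ b' : B, b' ≠ b → L (Vᵀ (b' : Fin n)) j = 0 := by
        intro b' hb'
        have hmem : (b' : Fin n) ∈ H j := by
          rw [hj]
          refine M.subset_closure _ (by rw [hE]; exact Set.subset_univ _) ?_
          exact ⟨b'.2, by simpa [Subtype.ext_iff] using hb'⟩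
        rw [hLval]
        exact (hW _ j).mpr hmem
      have h0 : L v j = 0 := by rw [hv]; rfl
      have hexp : v = ∑ b' : B, bas.repr v b' • Vᵀ (b' : Fin n) := by
        conv_lhs => rw [← bas.sum_repr v]
        exact Finset.sum_congr rfl fun b' _ => by rw [hbas_eq]
      rw [hexp] at h0
      rw [map_sum] at h0
      have h0' : ∑ b' : B, bas.repr v b' * L (Vᵀ (b' : Fin n)) j = 0 := by
        rw [← h0]
        rw [Finset.sum_apply]
        exact Finset.sum_congr rfl fun b' _ => by rw [_root_.map_smul]; rfl
      rw [Finset.sum_eq_single b (fun b' _ hb' => by rw [hS b' hb', mul_zero])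
        (fun hb => absurd (Finset.mem_univ b) hb)] at h0'
      have hSb : L (Vᵀ (b : Fin n)) j ≠ 0 := by
        rw [hLval]
        intro hc
        exact hb_not ((hW _ j).mp hc)
      exact (mul_eq_zero.mp h0').resolve_right hSb
    have : bas.repr v = 0 := by
      ext b; exact hrepr b
    have := bas.repr.map_eq_zero_iff.mp this
    exact this
  have hkerbot : LinearMap.ker L = ⊥ := LinearMap.ker_eq_bot'.mpr hker
  intro I
  have hfun : (fun i : I => (Vᵀ * W) (i : Fin n)) = L ∘ (fun i : I => Vᵀ (i : Fin n)) :=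
    funext fun i => hrow i
  constructor
  · intro hI
    rw [hfun]
    exact ((hV I).mp hI).map' L hkerbot
  · intro hI
    rw [hfun] at hI
    exact (hV I).mpr (hI.of_comp L)
end

section
/- Let S : Matrix (Fin n) (Fin h) k. Then there exist a realization V of M and a normal matrix W for V with S = Vᵀ * W if and only if both of the following hold: (i) for all i and j, S i j = 0 ↔ i ∈ H j; and (ii) Matrix.rank S = d + 1. -/
open Classical Matrix MvPolynomial

section Aux

variable {k : Type*} [Field k] {n d h : ℕ} {M : Matroid (Fin n)}

/-- The closure of any set is a flat. -/
lemma flat_closure_aux (M : Matroid (Fin n)) (X : Set (Fin n)) : M.IsFlat (M.closure X) := by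
  rw [Matroid.closure_def]
  haveI : Nonempty ↑{F : Set (Fin n) | M.IsFlat F ∧ X ∩ M.E ⊆ F} :=
    ⟨⟨M.E, M.ground_isFlat, Set.inter_subset_right⟩⟩
  rw [Set.sInter_eq_iInter]
  exact Matroid.IsFlat.iInter (fun F => F.2.1)

lemma base_ncard_aux (hrk : HasRank M (d + 1)) {B : Set (Fin n)} (hB : M.IsBase B) :
    B.ncard = d + 1 := by
  obtain ⟨B0, hB0, hc⟩ := hrk
  rw [hB.ncard_eq_ncard_of_isBase hB0, hc]

/-- For a base `B` and `b ∈ B`, the closure of `B \ {b}` is one of the enumerated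
hyperplanes. -/
lemma exists_hyp_aux (hrk : HasRank M (d + 1)) {H : Fin h → Set (Fin n)}
    (hH : HypEnum M d H) {B : Set (Fin n)} (hB : M.IsBase B) {b : Fin n} (hb : b ∈ B) :
    ∃ j, H j = M.closure (B \ {b}) := by
  refine (hH.2 _).mpr ?_
  refine ⟨flat_closure_aux M _, B \ {b}, (hB.indep.subset Set.diff_subset).isBasis_closure, ?_⟩
  rw [Set.ncard_diff_singleton_of_mem hb, base_ncard_aux hrk hB]
  omega

/-- Rows of `S` indexed by an `M`-independent set are linearly independent,
given the support condition. -/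
lemma rowsIndep_aux (hE : M.E = Set.univ) (hrk : HasRank M (d + 1))
    {H : Fin h → Set (Fin n)} (hH : HypEnum M d H) {S : Matrix (Fin n) (Fin h) k}
    (hsupp : ∀ i j, S i j = 0 ↔ i ∈ H j) {I : Set (Fin n)} (hI : M.Indep I) :
    LinearIndependent k (fun i : I => S i) := by
  obtain ⟨B, hB, hIB⟩ := hI.exists_isBase_superset
  have key : LinearIndependent k (fun b : B => S b) := by
    rw [linearIndependent_iff']
    intro s g hsum b hbs
    obtain ⟨j, hj⟩ := exists_hyp_aux hrk hH hB b.2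
    have hcol : ∑ b' ∈ s, g b' * S (b' : Fin n) j = 0 := by
      have := congrFun hsum j
      simpa using this
    have hsingle : ∑ b' ∈ s, g b' * S (b' : Fin n) j = g b * S (b : Fin n) j := by
      refine Finset.sum_eq_single_of_mem b hbs ?_
      intro b' _ hne
      have hb'mem : (b' : Fin n) ∈ M.closure (B \ {(b : Fin n)}) := by
        refine M.subset_closure (B \ {(b : Fin n)})
          (by rw [hE]; exact Set.subset_univ _) ⟨b'.2, ?_⟩
        exact fun hv => hne (Subtype.ext hv)
      rw [(hsupp _ j).mpr (hj ▸ hb'mem), mul_zero]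
    have hSbj : S (b : Fin n) j ≠ 0 := by
      intro h0
      exact hB.indep.notMem_closure_sdiff_of_mem b.2 (hj ▸ (hsupp _ j).mp h0)
    have := hsingle ▸ hcol
    exact (mul_eq_zero.mp this).resolve_right hSbj
  exact key.comp (Set.inclusion hIB) (Set.inclusion_injective hIB)

lemma rank_ge_aux (hE : M.E = Set.univ) (hrk : HasRank M (d + 1))
    {H : Fin h → Set (Fin n)} (hH : HypEnum M d H) {S : Matrix (Fin n) (Fin h) k}
    (hsupp : ∀ i j, S i j = 0 ↔ i ∈ H j) : d + 1 ≤ S.rank := by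
  obtain ⟨B, hB, hc⟩ := hrk
  have hli := rowsIndep_aux hE ⟨B, hB, hc⟩ hH hsupp hB.indep
  haveI : Fintype B := (Set.toFinite B).fintype
  have hcard : Fintype.card B = d + 1 := by
    rw [← Nat.card_eq_fintype_card, Nat.card_coe_set_eq, hc]
  have h1 : Module.finrank k
      (Submodule.span k (Set.range fun b : B => S (b : Fin n))) = d + 1 := by
    rw [finrank_span_eq_card hli, hcard]
  rw [Matrix.rank_eq_finrank_span_row, ← h1]
  exact Submodule.finrank_mono (Submodule.span_mono
    (by rintro _ ⟨b, rfl⟩; exact ⟨(b : Fin n), rfl⟩))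

/-- If the rows of `S` indexed by `I` are linearly independent then `I` is
independent in `M`, given support and rank conditions. -/
lemma indepOfRows_aux (hE : M.E = Set.univ) (hrk : HasRank M (d + 1))
    {H : Fin h → Set (Fin n)} (hH : HypEnum M d H) {S : Matrix (Fin n) (Fin h) k}
    (hsupp : ∀ i j, S i j = 0 ↔ i ∈ H j) (hrank : S.rank = d + 1)
    {I : Set (Fin n)} (hLI : LinearIndependent k (fun i : I => S i)) : M.Indep I := by
  by_contra hdep
  have hIE : I ⊆ M.E := by rw [hE]; exact Set.subset_univ I
  obtain ⟨J, hJ⟩ := M.exists_isBasis I hIE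
  have hJI : J ⊆ I := hJ.subset
  have hne : J ≠ I := fun hh => hdep (hh ▸ hJ.indep)
  obtain ⟨i, hiI, hiJ⟩ : ∃ i, i ∈ I ∧ i ∉ J := by
    by_contra hcon; push_neg at hcon
    exact hne (hJI.antisymm fun x hx => hcon x hx)
  have hicl : i ∈ M.closure J := hJ.subset_closure hiI
  obtain ⟨B, hB, hJB⟩ := hJ.indep.exists_isBase_superset
  have hBli := rowsIndep_aux hE hrk hH hsupp hB.indep
  haveI : Fintype B := (Set.toFinite B).fintype
  have hcard : Fintype.card B = d + 1 := by
    rw [← Nat.card_eq_fintype_card, Nat.card_coe_set_eq, base_ncard_aux hrk hB]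
  have hspan : Submodule.span k (Set.range fun b : B => S (b : Fin n)) =
      Submodule.span k (Set.range S) := by
    refine Submodule.eq_of_le_of_finrank_le
      (Submodule.span_mono (by rintro _ ⟨b, rfl⟩; exact ⟨(b : Fin n), rfl⟩)) ?_
    rw [finrank_span_eq_card hBli, hcard]
    exact ((Matrix.rank_eq_finrank_span_row S).symm.trans hrank).le
  have hmem : S i ∈ Submodule.span k (Set.range fun b : B => S (b : Fin n)) := by
    rw [hspan]; exact Submodule.subset_span ⟨i, rfl⟩
  obtain ⟨c, hc⟩ := (Submodule.mem_span_range_iff_exists_fun k).mp hmem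
  have hzero : ∀ b : B, (b : Fin n) ∉ J → c b = 0 := by
    intro b hbJ
    obtain ⟨j, hj⟩ := exists_hyp_aux hrk hH hB b.2
    have hcol : ∑ b' : B, c b' * S (b' : Fin n) j = S i j := by
      have := congrFun hc j
      simpa using this
    have hSij : S i j = 0 := by
      refine (hsupp i j).mpr (hj ▸ ?_)
      refine M.closure_subset_closure ?_ hicl
      intro x hx
      exact ⟨hJB hx, fun hv => hbJ (hv ▸ hx)⟩
    have hsingle : ∑ b' : B, c b' * S (b' : Fin n) j = c b * S (b : Fin n) j := by
      refine Finset.sum_eq_single_of_mem b (Finset.mem_univ b) ?_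
      intro b' _ hne'
      have hb'mem : (b' : Fin n) ∈ M.closure (B \ {(b : Fin n)}) := by
        refine M.subset_closure (B \ {(b : Fin n)})
          (by rw [hE]; exact Set.subset_univ _) ⟨b'.2, ?_⟩
        exact fun hv => hne' (Subtype.ext hv)
      rw [(hsupp _ j).mpr (hj ▸ hb'mem), mul_zero]
    have hSbj : S (b : Fin n) j ≠ 0 := by
      intro h0
      exact hB.indep.notMem_closure_sdiff_of_mem b.2 (hj ▸ (hsupp _ j).mp h0)
    have : c b * S (b : Fin n) j = 0 := by rw [← hsingle, hcol, hSij]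
    exact (mul_eq_zero.mp this).resolve_right hSbj
  have hmemJ : S i ∈ Submodule.span k ((fun x : I => S (x : Fin n)) ''
      (Subtype.val ⁻¹' J)) := by
    rw [← hc]
    refine Submodule.sum_mem _ ?_
    intro b _
    by_cases hbJ : (b : Fin n) ∈ J
    · exact Submodule.smul_mem _ _
        (Submodule.subset_span ⟨⟨(b : Fin n), hJI hbJ⟩, hbJ, rfl⟩)
    · rw [hzero b hbJ, zero_smul]; exact Submodule.zero_mem _
  exact hLI.notMem_span_image
    (show (⟨i, hiI⟩ : I) ∉ Subtype.val ⁻¹' J from hiJ) hmemJ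

/-- Transfer of linear independence through the coordinate map of a basis of a
submodule containing all rows. -/
lemma li_iff_aux {h : ℕ} (S : Matrix (Fin n) (Fin h) k) (Rsp : Submodule k (Fin h → k))
    (hmem : ∀ i, S i ∈ Rsp) (β : Module.Basis (Fin (d + 1)) k Rsp) (I : Set (Fin n)) :
    LinearIndependent k
        (fun i : I => (fun r => β.equivFun ⟨S (i : Fin n), hmem _⟩ r : Fin (d + 1) → k)) ↔
      LinearIndependent k (fun i : I => S (i : Fin n)) := by
  have e1 : LinearIndependent k
      (fun i : I => (fun r => β.equivFun ⟨S (i : Fin n), hmem _⟩ r : Fin (d + 1) → k)) ↔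
      LinearIndependent k (fun i : I => (⟨S (i : Fin n), hmem _⟩ : Rsp)) :=
    β.equivFun.toLinearMap.linearIndependent_iff
      (v := fun i : I => (⟨S (i : Fin n), hmem _⟩ : Rsp))
      (LinearMap.ker_eq_bot_of_injective β.equivFun.injective)
  have e2 : LinearIndependent k (fun i : I => S (i : Fin n)) ↔
      LinearIndependent k (fun i : I => (⟨S (i : Fin n), hmem _⟩ : Rsp)) :=
    Rsp.subtype.linearIndependent_iff
      (v := fun i : I => (⟨S (i : Fin n), hmem _⟩ : Rsp)) (Submodule.ker_subtype _)
  exact e1.trans e2.symm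

/-- Each entry of `S` is recovered from the coordinates and the basis vectors. -/
lemma fac_aux {h : ℕ} (S : Matrix (Fin n) (Fin h) k) (Rsp : Submodule k (Fin h → k))
    (hmem : ∀ i, S i ∈ Rsp) (β : Module.Basis (Fin (d + 1)) k Rsp) (i : Fin n) (j : Fin h) :
    S i j = ∑ r, β.equivFun ⟨S i, hmem i⟩ r * (β r : Fin h → k) j := by
  have hsum := β.sum_equivFun ⟨S i, hmem i⟩
  calc S i j = ((⟨S i, hmem i⟩ : Rsp) : Fin h → k) j := rfl
    _ = ((∑ r, β.equivFun ⟨S i, hmem i⟩ r • β r : Rsp) : Fin h → k) j := by rw [hsum]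
    _ = ∑ r, β.equivFun ⟨S i, hmem i⟩ r * (β r : Fin h → k) j := by
        rw [AddSubmonoidClass.coe_finset_sum]
        simp [Finset.sum_apply]

end Aux

set_option maxHeartbeats 1000000 in
/-- a matrix is a slack matrix of some realization of `M` iff it has the
right support and rank `d+1`. -/
theorem stmt3 {k : Type*} [Field k] {n d h : ℕ} (M : Matroid (Fin n))
    (hE : M.E = Set.univ) (hrk : HasRank M (d + 1))
    (H : Fin h → Set (Fin n)) (hH : HypEnum M d H)
    (S : Matrix (Fin n) (Fin h) k) :
    (∃ (V : Matrix (Fin (d + 1)) (Fin n) k) (W : Matrix (Fin (d + 1)) (Fin h) k),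
        IsRealization M V ∧ IsNormalMatrix H V W ∧ S = Vᵀ * W) ↔
      ((∀ i j, S i j = 0 ↔ i ∈ H j) ∧ S.rank = d + 1) := by
  constructor
  · rintro ⟨V, W, hreal, hnorm, hfac⟩
    have hsupp : ∀ i j, S i j = 0 ↔ i ∈ H j := by
      intro i j
      rw [hfac, Matrix.mul_apply]
      rw [show ∑ r, Vᵀ i r * W r j = ∑ r, W r j * V r i from
        Finset.sum_congr rfl fun r _ => mul_comm _ _]
      exact hnorm i j
    refine ⟨hsupp, le_antisymm ?_ (rank_ge_aux hE hrk hH hsupp)⟩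
    rw [hfac]
    exact (Matrix.rank_mul_le_left _ _).trans
      ((Matrix.rank_le_card_width _).trans (by simp))
  · rintro ⟨hsupp, hrank⟩
    have hfr : Module.finrank k (Submodule.span k (Set.range S)) = d + 1 := by
      exact (Matrix.rank_eq_finrank_span_row S).symm.trans hrank
    obtain ⟨β⟩ : Nonempty (Module.Basis (Fin (d + 1)) k (Submodule.span k (Set.range S))) :=
      ⟨Module.finBasisOfFinrankEq k _ hfr⟩
    have hmem : ∀ i, S i ∈ Submodule.span k (Set.range S) :=
      fun i => Submodule.subset_span ⟨i, rfl⟩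
    refine ⟨fun r i => β.equivFun ⟨S i, hmem i⟩ r, fun r j => (β r : Fin h → k) j,
      ?_, ?_, ?_⟩
    · intro I
      refine Iff.trans ⟨fun hI => rowsIndep_aux hE hrk hH hsupp hI,
        fun hI => indepOfRows_aux hE hrk hH hsupp hrank hI⟩ ?_
      exact (li_iff_aux S _ hmem β I).symm
    · intro i j
      rw [show ∑ r, (β r : Fin h → k) j * β.equivFun ⟨S i, hmem i⟩ r
          = ∑ r, β.equivFun ⟨S i, hmem i⟩ r * (β r : Fin h → k) j from
        Finset.sum_congr rfl fun r _ => mul_comm _ _]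
      rw [← fac_aux S _ hmem β i j]
      exact hsupp i j
    · ext i j
      refine Eq.trans ?_ (Matrix.mul_apply).symm
      exact fac_aux S _ hmem β i j
end
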